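/- Let f be a polynomial of degree p with Bernstein coefficient vector c on the interval [a,b] and coefficient vector c̃ on the interval [ã, b̃]. Then c̃ = A c, where A is the (p+1)×(p+1) matrix with entries A_{jk} = ∑_{i=max(1, j+k-p-1)}^{min(j,k)} B_i^{j-1}(b̃) B_{k-i+1}^{p-j+1}(ã), where the Bernstein polynomials B_i^q on the right-hand side are defined over the interval [a,b]. -/

import Mathlib

/-- Bernstein basis polynomial of degree `p` on the interval `[a,b]`, 1-based index `i`. -/
noncomputable def bernAB (a b : ℝ) (p i : ℕ) (t : ℝ) : ℝ :=
  (p.choose (i - 1)) * (b - t) ^ (p - (i - 1)) * (t - a) ^ (i - 1) / (b - a) ^ p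

private lemma chooseId (p k n m : ℕ) (hk : k ≤ p) (hm : m ≤ k) (hn : n ≤ p - k) :
    p.choose k * ((p-k).choose n * k.choose m) =
      p.choose (n+m) * ((n+m).choose m * (p-n-m).choose (k-m)) := by
  have hnm : n + m ≤ p := by omega
  have h1 : p.choose k * k.choose m = p.choose m * (p-m).choose (k-m) :=
    Nat.choose_mul hm
  have h2 : p.choose (n+m) * (n+m).choose m = p.choose m * (p-m).choose n := by
    have := Nat.choose_mul (n := p) (Nat.le_add_left m n)
    simpa using this
  have hle : k - m + n ≤ p - m := by omega
  have h3 : (p-m).choose (k-m+n) * (k-m+n).choose (k-m) =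
      (p-m).choose (k-m) * (p-k).choose n := by
    have := Nat.choose_mul (n := p-m) (Nat.le_add_right (k-m) n)
    rw [this]
    congr 2 <;> omega
  have h4 : (p-m).choose (k-m+n) * (k-m+n).choose n =
      (p-m).choose n * (p-n-m).choose (k-m) := by
    have := Nat.choose_mul (n := p-m) (Nat.le_add_left n (k-m))
    rw [this]
    congr 2 <;> omega
  have hsym : (k-m+n).choose (k-m) = (k-m+n).choose n := by
    rw [← Nat.choose_symm (Nat.le_add_right (k-m) n)]
    congr 1
    omega
  have h5 : (p-m).choose (k-m) * (p-k).choose n =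
      (p-m).choose n * (p-n-m).choose (k-m) := by
    rw [← h3, hsym, h4]
  calc p.choose k * ((p-k).choose n * k.choose m)
      = p.choose k * k.choose m * (p-k).choose n := by ring
    _ = p.choose m * (p-m).choose (k-m) * (p-k).choose n := by rw [h1]
    _ = p.choose m * ((p-m).choose (k-m) * (p-k).choose n) := by ring
    _ = p.choose m * ((p-m).choose n * (p-n-m).choose (k-m)) := by rw [h5]
    _ = p.choose m * (p-m).choose n * (p-n-m).choose (k-m) := by ring
    _ = p.choose (n+m) * (n+m).choose m * (p-n-m).choose (k-m) := by rw [h2]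
    _ = _ := by ring

private lemma comb (p k : ℕ) (hk : k ≤ p) (P Q A₁ B₁ A₂ B₂ : ℝ) :
    (p.choose k : ℝ) * (P*A₁+Q*B₁)^(p-k) * (P*A₂+Q*B₂)^k
      = ∑ j ∈ Finset.range (p+1), ∑ i ∈ Finset.Icc (max 1 ((j+1)+(k+1)-(p+1))) (min (j+1) (k+1)),
          (j.choose (i-1) : ℝ) * ((p-j).choose (k+1-i)) * (p.choose j)
            * B₁^(j-(i-1)) * B₂^(i-1) * A₁^((p-j)-(k+1-i)) * A₂^(k+1-i) * P^(p-j) * Q^j := by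
  rw [add_pow, add_pow]
  simp only [Finset.mul_sum, Finset.sum_mul]
  rw [Finset.sum_sigma', Finset.sum_sigma']
  refine Finset.sum_nbij' (fun x => ⟨p - x.2 - x.1, k - x.1 + 1⟩)
    (fun x => ⟨k + 1 - x.2, p - x.1 - (k + 1 - x.2)⟩) ?_ ?_ ?_ ?_ ?_
  · rintro ⟨m, n⟩ hx
    simp only [Finset.mem_sigma, Finset.mem_range, Finset.mem_Icc] at hx ⊢
    omega
  · rintro ⟨j, i⟩ hx
    simp only [Finset.mem_sigma, Finset.mem_range, Finset.mem_Icc] at hx ⊢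
    omega
  · rintro ⟨m, n⟩ hx
    simp only [Finset.mem_sigma, Finset.mem_range, Finset.mem_Icc] at hx
    have h1 : k + 1 - (k - m + 1) = m := by omega
    have h2 : p - (p - n - m) - (k + 1 - (k - m + 1)) = n := by omega
    have h3 : p - (p - n - m) - m = n := by omega
    simp only [h1, h2, h3]
  · rintro ⟨j, i⟩ hx
    simp only [Finset.mem_sigma, Finset.mem_range, Finset.mem_Icc] at hx
    have h1 : p - (p - j - (k + 1 - i)) - (k + 1 - i) = j := by omega
    have h2 : k - (k + 1 - i) + 1 = i := by omega
    simp only [h1, h2]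
  · rintro ⟨m, n⟩ hx
    simp only [Finset.mem_sigma, Finset.mem_range, Finset.mem_Icc] at hx
    obtain ⟨hm, hn⟩ := hx
    have hn' : n ≤ p - k := by omega
    have hm' : m ≤ k := by omega
    have hnm : n + m ≤ p := by omega
    have e1 : k - m + 1 - 1 = k - m := by omega
    have e2 : k + 1 - (k - m + 1) = m := by omega
    have e3 : p - (p - n - m) = n + m := by omega
    have e4 : (p - n - m) - (k - m) = p - k - n := by omega
    have e5 : p - (p - n - m) - (k + 1 - (k - m + 1)) = n := by omega
    have e6 : n + m - m = n := by omega
    simp only [e1, e2, e3, e4, e5, e6]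
    have hc : ((p.choose k * ((p-k).choose n * k.choose m) : ℕ) : ℝ)
        = ((p.choose (n+m) * ((n+m).choose m * (p-n-m).choose (k-m)) : ℕ) : ℝ) := by
      exact_mod_cast congrArg (Nat.cast : ℕ → ℝ) (chooseId p k n m hk hm' hn')
    push_cast at hc
    rw [show p.choose (p - n - m) = p.choose (n + m) by
          rw [show p - n - m = p - (n + m) by omega, Nat.choose_symm hnm],
        show Q ^ (p - n - m) = Q ^ (p - k - n) * Q ^ (k - m) by
          rw [← pow_add]; congr 1; omega,
        pow_add, mul_pow, mul_pow, mul_pow, mul_pow]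
    linear_combination (P^n * P^m * Q^(p-k-n) * Q^(k-m) * A₁^n * B₁^(p-k-n) * A₂^m * B₂^(k-m)) * hc

private lemma bern_expand (p k : ℕ) (hk : k ≤ p) (a b a' b' : ℝ) (hab : a < b) (hab2 : a' < b')
    (t : ℝ) :
    bernAB a b p (k+1) t = ∑ j ∈ Finset.range (p+1),
      (∑ i ∈ Finset.Icc (max 1 ((j+1)+(k+1)-(p+1))) (min (j+1) (k+1)),
        bernAB a b j i b' * bernAB a b (p-j) (k+1-i+1) a') * bernAB a' b' p (j+1) t := by
  have hD : (b - a) ≠ 0 := sub_ne_zero.mpr (ne_of_gt hab)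
  have hD' : (b' - a') ≠ 0 := sub_ne_zero.mpr (ne_of_gt hab2)
  have key := comb p k hk (b'-t) (t-a') (b-a') (b-b') (a'-a) (b'-a)
  calc bernAB a b p (k+1) t
      = ((p.choose k : ℝ) * ((b'-t)*(b-a')+(t-a')*(b-b'))^(p-k)
          * ((b'-t)*(a'-a)+(t-a')*(b'-a))^k) / ((b-a)^p * (b'-a')^p) := by
        rw [bernAB]
        simp only [Nat.add_sub_cancel]
        rw [show (b'-t)*(b-a')+(t-a')*(b-b') = (b-t)*(b'-a') by ring,
            show (b'-t)*(a'-a)+(t-a')*(b'-a) = (t-a)*(b'-a') by ring,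
            mul_pow, mul_pow]
        rw [show (p.choose k : ℝ) * ((b-t)^(p-k)*(b'-a')^(p-k)) * ((t-a)^k*(b'-a')^k)
              = ((p.choose k : ℝ) * (b-t)^(p-k) * (t-a)^k) * (b'-a')^p by
            rw [show (b'-a')^p = (b'-a')^(p-k) * (b'-a')^k by
              rw [← pow_add]; congr 1; omega]
            ring]
        rw [mul_div_mul_right _ _ (pow_ne_zero p hD')]
    _ = (∑ j ∈ Finset.range (p+1), ∑ i ∈ Finset.Icc (max 1 ((j+1)+(k+1)-(p+1))) (min (j+1) (k+1)),
          ((j.choose (i-1) : ℝ) * ((p-j).choose (k+1-i)) * (p.choose j)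
            * (b-b')^(j-(i-1)) * (b'-a)^(i-1) * (b-a')^((p-j)-(k+1-i)) * (a'-a)^(k+1-i)
            * (b'-t)^(p-j) * (t-a')^j)) / ((b-a)^p * (b'-a')^p) := by rw [key]
    _ = _ := by
        rw [Finset.sum_div]
        refine Finset.sum_congr rfl fun j hj => ?_
        rw [Finset.sum_div, Finset.sum_mul]
        refine Finset.sum_congr rfl fun i hi => ?_
        simp only [Finset.mem_range] at hj
        simp only [bernAB, Nat.add_sub_cancel]
        rw [div_mul_div_comm, div_mul_div_comm]
        rw [show (b-a)^j * (b-a)^(p-j) * (b'-a')^p = (b-a)^p * (b'-a')^p by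
          rw [← pow_add, Nat.add_sub_cancel' (by omega : j ≤ p)]]
        congr 1
        ring

private lemma bern_unique (p : ℕ) (a' b' : ℝ) (hab2 : a' < b') (d : Fin (p+1) → ℝ)
    (hd : ∀ t : ℝ, ∑ j : Fin (p+1), d j * bernAB a' b' p ((j:ℕ)+1) t = 0) :
    ∀ j, d j = 0 := by
  have hD' : (b' - a') ≠ 0 := sub_ne_zero.mpr (ne_of_gt hab2)
  set S : Polynomial ℝ :=
    ∑ j : Fin (p+1), Polynomial.C (d j * (p.choose (j:ℕ))) * Polynomial.X ^ (j:ℕ) with hSdef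
  have hS : ∀ y : ℝ, 0 < y → S.eval y = 0 := by
    intro y hy
    have h1y : (1 + y) ≠ 0 := by positivity
    have ht := hd ((a' + b' * y) / (1 + y))
    have hterm : ∀ j : Fin (p+1),
        bernAB a' b' p ((j:ℕ)+1) ((a' + b' * y) / (1 + y))
          = (p.choose (j:ℕ)) * y^(j:ℕ) / (1+y)^p := by
      intro j
      have hbt : b' - (a' + b' * y) / (1 + y) = (b' - a') / (1 + y) := by
        field_simp; ring
      have hta : (a' + b' * y) / (1 + y) - a' = ((b' - a') * y) / (1 + y) := by
        field_simp; ring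
      rw [bernAB, Nat.add_sub_cancel, hbt, hta, div_pow, div_pow, mul_pow]
      have hj : (j : ℕ) ≤ p := by omega
      rw [show (b'-a')^p = (b'-a')^(p-(j:ℕ)) * (b'-a')^(j:ℕ) by
            rw [← pow_add]; congr 1; omega,
          show (1+y)^p = (1+y)^(p-(j:ℕ)) * (1+y)^(j:ℕ) by
            rw [← pow_add]; congr 1; omega]
      field_simp
    simp only [hterm] at ht
    have : S.eval y = (∑ j : Fin (p+1), d j * ((p.choose (j:ℕ)) * y^(j:ℕ) / (1+y)^p)) * (1+y)^p := by
      rw [hSdef, Polynomial.eval_finset_sum, Finset.sum_mul]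
      refine Finset.sum_congr rfl fun j _ => ?_
      simp only [Polynomial.eval_mul, Polynomial.eval_C, Polynomial.eval_pow, Polynomial.eval_X]
      field_simp
    rw [this, ht, zero_mul]
  have hS0 : S = 0 := by
    apply Polynomial.eq_zero_of_infinite_isRoot
    apply Set.Infinite.mono (s := Set.Ioi (0:ℝ))
    · intro y hy
      exact hS y hy
    · exact Set.Ioi_infinite 0
  intro j
  have hcoeff : S.coeff (j:ℕ) = d j * (p.choose (j:ℕ)) := by
    rw [hSdef, Polynomial.finset_sum_coeff]
    rw [Finset.sum_eq_single j]
    · rw [Polynomial.coeff_C_mul, Polynomial.coeff_X_pow, if_pos rfl, mul_one]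
    · intro b _ hb
      rw [Polynomial.coeff_C_mul, Polynomial.coeff_X_pow,
        if_neg (fun h => hb (Fin.ext h.symm)), mul_zero]
    · intro hj; exact absurd (Finset.mem_univ j) hj
  have hchoose : (p.choose (j:ℕ) : ℝ) ≠ 0 := by
    have : 0 < p.choose (j:ℕ) := Nat.choose_pos (by omega)
    positivity
  have hz : d j * (p.choose (j:ℕ) : ℝ) = 0 := by
    rw [← hcoeff, hS0, Polynomial.coeff_zero]
  exact (mul_eq_zero.mp hz).resolve_right hchoose

/-- Change of interval for Bernstein coefficients: if a degree-`p` polynomial has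
Bernstein coefficients `c` on `[a,b]` and `c'` on `[a',b']`, then `c' = A c`, where
`A_{jk} = ∑_{i = max(1, j+k-p-1)}^{min(j,k)} B_i^{j-1}(b') B_{k-i+1}^{p-j+1}(a')`
with the Bernstein polynomials on the right defined over `[a,b]`
(all indices 1-based; here `j k : Fin (p+1)` correspond to 1-based indices `j+1, k+1`). -/
theorem bern_change_of_interval (p : ℕ) (a b a' b' : ℝ) (hab : a < b) (hab2 : a' < b')
    (c c' : Fin (p + 1) → ℝ)
    (h : ∀ t : ℝ, ∑ i : Fin (p + 1), c i * bernAB a b p ((i : ℕ) + 1) t =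
        ∑ i : Fin (p + 1), c' i * bernAB a' b' p ((i : ℕ) + 1) t) :
    ∀ j : Fin (p + 1), c' j =
      ∑ k : Fin (p + 1),
        (∑ i ∈ Finset.Icc (max 1 (((j : ℕ) + 1) + ((k : ℕ) + 1) - (p + 1)))
              (min ((j : ℕ) + 1) ((k : ℕ) + 1)),
          bernAB a b (j : ℕ) i b' * bernAB a b (p - (j : ℕ)) ((k : ℕ) + 1 - i + 1) a') * c k := by
  have key := bern_unique p a' b' hab2
    (fun jj => c' jj - ∑ k : Fin (p + 1),
      (∑ i ∈ Finset.Icc (max 1 (((jj : ℕ) + 1) + ((k : ℕ) + 1) - (p + 1)))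
            (min ((jj : ℕ) + 1) ((k : ℕ) + 1)),
        bernAB a b (jj : ℕ) i b' * bernAB a b (p - (jj : ℕ)) ((k : ℕ) + 1 - i + 1) a') * c k)
    ?_
  · intro j
    exact sub_eq_zero.mp (key j)
  · intro t
    have hsum : ∀ k : Fin (p + 1), bernAB a b p ((k:ℕ)+1) t
        = ∑ jj : Fin (p + 1),
            (∑ i ∈ Finset.Icc (max 1 (((jj:ℕ)+1)+((k:ℕ)+1)-(p+1))) (min ((jj:ℕ)+1) ((k:ℕ)+1)),
              bernAB a b (jj:ℕ) i b' * bernAB a b (p-(jj:ℕ)) ((k:ℕ)+1-i+1) a')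
              * bernAB a' b' p ((jj:ℕ)+1) t := by
      intro k
      rw [bern_expand p (k:ℕ) (by omega) a b a' b' hab hab2 t]
      exact (Fin.sum_univ_eq_sum_range (fun jj =>
        (∑ i ∈ Finset.Icc (max 1 ((jj+1)+((k:ℕ)+1)-(p+1))) (min (jj+1) ((k:ℕ)+1)),
          bernAB a b jj i b' * bernAB a b (p-jj) ((k:ℕ)+1-i+1) a')
          * bernAB a' b' p (jj+1) t) (p+1)).symm
    simp only [sub_mul, Finset.sum_sub_distrib]
    rw [← h t]
    rw [sub_eq_zero]
    simp only [Finset.sum_mul]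
    rw [Finset.sum_comm]
    refine Finset.sum_congr rfl fun k _ => ?_
    rw [hsum k, Finset.mul_sum]
    refine Finset.sum_congr rfl fun jj _ => ?_
    rw [Finset.sum_mul, Finset.mul_sum]
    exact Finset.sum_congr rfl fun i _ => by ring
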